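/- arXiv:1401.7044 — 13 statements merged into one kernel-verified Lean document; each statement's English description precedes it below -/
import Mathlib

section
/- Let F be a field, let λ ∈ F be nonzero, let α : ℤ → F and β : ℤ → F be sequences of nonzero elements, and let Ω : ℤ × ℤ → F take nonzero values. Define U_{l,m} = λ^l · Ω_{l,m}. Assume (i) the (1,−2)-periodicity Ω_{l+1,m−2} = Ω_{l,m} for all l,m ∈ ℤ, and (ii) U satisfies the lattice modified KdV equation U_{l+1,m+1}/U_{l,m} = (α_l U_{l+1,m} − β_m U_{l,m+1})/(α_l U_{l,m+1} − β_m U_{l+1,m}) for all l,m (all denominators nonzero). Then for all l,m: Ω_{l,m+3}/Ω_{l,m} = (Ω_{l,m+1} − λ(α_l/β_m)Ω_{l,m+2}) / (λ·(λΩ_{l,m+2} − (α_l/β_m)Ω_{l,m+1})). -/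
/-- The `(1,-2)`-periodic reduction of the lattice modified KdV equation
(of ABS type `H3_{(0,0)}`), `U_{l,m} = λ^l Ω_{l,m}`, satisfies the reduced equation
`Ω_{l,m+3}/Ω_{l,m} = (Ω_{l,m+1} - λ(α_l/β_m)Ω_{l,m+2}) / (λ(λΩ_{l,m+2} - (α_l/β_m)Ω_{l,m+1}))`. -/
theorem reduced_lattice_mkdv
    (F : Type*) [Field F] (lam : F) (hlam : lam ≠ 0)
    (α β : ℤ → F) (hα : ∀ l, α l ≠ 0) (hβ : ∀ m, β m ≠ 0)
    (Ω : ℤ → ℤ → F) (hΩ : ∀ l m, Ω l m ≠ 0)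
    (U : ℤ → ℤ → F) (hU : ∀ l m, U l m = lam ^ l * Ω l m)
    (hper : ∀ l m, Ω (l + 1) (m - 2) = Ω l m)
    (hden : ∀ l m, α l * U l (m + 1) - β m * U (l + 1) m ≠ 0)
    (hmkdv : ∀ l m, U (l + 1) (m + 1) / U l m =
      (α l * U (l + 1) m - β m * U l (m + 1)) /
      (α l * U l (m + 1) - β m * U (l + 1) m)) :
    ∀ l m, Ω l (m + 3) / Ω l m =
      (Ω l (m + 1) - lam * (α l / β m) * Ω l (m + 2)) /
      (lam * (lam * Ω l (m + 2) - (α l / β m) * Ω l (m + 1))) := by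
  intro l m
  have hp1 : Ω (l + 1) (m + 1) = Ω l (m + 3) := by
    have h := hper l (m + 3)
    rw [show m + 3 - 2 = m + 1 from by ring] at h
    exact h
  have hp2 : Ω (l + 1) m = Ω l (m + 2) := by
    have h := hper l (m + 2)
    rw [show m + 2 - 2 = m from by ring] at h
    exact h
  have key := hmkdv l m
  rw [hU, hU, hU, hU, hp1, hp2, zpow_add_one₀ hlam] at key
  have hd := hden l m
  rw [hU, hU, hp2, zpow_add_one₀ hlam] at hd
  have hL : (lam : F) ^ l ≠ 0 := zpow_ne_zero _ hlam
  have h0 := hΩ l m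
  have h1 := hΩ l (m + 1)
  have h2 := hΩ l (m + 2)
  have hb := hβ m
  -- denominators in key
  have hdL : lam ^ l * Ω l m ≠ 0 := mul_ne_zero hL h0
  have hdR : α l * (lam ^ l * Ω l (m + 1)) - β m * (lam ^ l * lam * Ω l (m + 2)) ≠ 0 := by
    intro h; apply hd; linear_combination h
  rw [div_eq_div_iff hdL hdR] at key
  -- cancel lam^l * lam^l
  have keyeq : lam * Ω l (m + 3) * (α l * Ω l (m + 1) - β m * (lam * Ω l (m + 2)))
      = (α l * (lam * Ω l (m + 2)) - β m * Ω l (m + 1)) * Ω l m := by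
    apply mul_left_cancel₀ (mul_ne_zero hL hL)
    linear_combination key
  have hd' : α l * Ω l (m + 1) - β m * (lam * Ω l (m + 2)) ≠ 0 := by
    intro h; apply hdR; linear_combination (lam ^ l) * h
  have hgd : lam * (lam * Ω l (m + 2) - α l / β m * Ω l (m + 1)) ≠ 0 := by
    apply mul_ne_zero hlam
    intro h; apply hd'
    have h' : β m * (lam * Ω l (m + 2) - α l / β m * Ω l (m + 1)) = 0 := by rw [h, mul_zero]
    field_simp at h'
    linear_combination -h'
  rw [div_eq_div_iff h0 hgd]
  field_simp
  linear_combination -keyeq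
end

section
/- Let F be a field, let λ, α ∈ F be nonzero, let β : ℤ → F be a sequence of nonzero elements, and let Ω : ℤ → F take nonzero values. Assume Ω satisfies, for all m ∈ ℤ, the reduced lattice modified KdV equation Ω_{m+3}/Ω_m = (Ω_{m+1} − λ(α/β_m)Ω_{m+2}) / (λ·(λΩ_{m+2} − (α/β_m)Ω_{m+1})). Define f_m = λΩ_{m+2}/Ω_{m+1}, g_m = λΩ_{m+1}/Ω_m, t_m = −α/β_m, a_m = β_m/β_{m+1}. Then for all m (all denominators nonzero): g_{m+2} = (λ²/(g_m f_m))·(1 + t_m f_m)/(t_m + f_m) and f_{m+2} = (λ²/(f_m g_{m+2}))·(1 + a_m t_m g_{m+2})/(a_m t_m + g_{m+2}); that is, (f,g) solve the q-Painlevé III system. -/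
/-- The substitution `f = λΩ_{m+2}/Ω_{m+1}`, `g = λΩ_{m+1}/Ω_m`,
`t = -α/β_m`, `a = β_m/β_{m+1}` turns the reduced lattice modified KdV equation
into the `q`-Painlevé III system. -/
theorem reduced_mkdv_to_qPIII
    (F : Type*) [Field F] (lam α : F) (hlam : lam ≠ 0) (hα : α ≠ 0)
    (β : ℤ → F) (hβ : ∀ m, β m ≠ 0)
    (Ω : ℤ → F) (hΩ : ∀ m, Ω m ≠ 0)
    (hΩden : ∀ m : ℤ, lam * Ω (m + 2) - (α / β m) * Ω (m + 1) ≠ 0)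
    (hred : ∀ m : ℤ, Ω (m + 3) / Ω m =
      (Ω (m + 1) - lam * (α / β m) * Ω (m + 2)) /
      (lam * (lam * Ω (m + 2) - (α / β m) * Ω (m + 1))))
    (f g t a : ℤ → F)
    (hf : ∀ m, f m = lam * Ω (m + 2) / Ω (m + 1))
    (hg : ∀ m, g m = lam * Ω (m + 1) / Ω m)
    (ht : ∀ m, t m = -α / β m)
    (ha : ∀ m, a m = β m / β (m + 1))
    (hden1 : ∀ m, t m + f m ≠ 0)
    (hden2 : ∀ m, a m * t m + g (m + 2) ≠ 0) :
    ∀ m : ℤ,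
      g (m + 2) = lam ^ 2 / (g m * f m) * ((1 + t m * f m) / (t m + f m)) ∧
      f (m + 2) = lam ^ 2 / (f m * g (m + 2)) *
        ((1 + a m * t m * g (m + 2)) / (a m * t m + g (m + 2))) := by
  have key : ∀ m : ℤ,
      g (m + 2) = lam ^ 2 / (g m * f m) * ((1 + t m * f m) / (t m + f m)) := by
    intro m
    have hb := hβ m
    have hΩm := hΩ m
    have hΩm1 := hΩ (m + 1)
    have hΩm2 := hΩ (m + 2)
    have h := hred m
    rw [div_eq_div_iff (hΩ m) (mul_ne_zero hlam (hΩden m))] at h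
    field_simp at h
    have hgne : g m ≠ 0 := by
      rw [hg m]; exact div_ne_zero (mul_ne_zero hlam hΩm1) hΩm
    have hfne : f m ≠ 0 := by
      rw [hf m]; exact div_ne_zero (mul_ne_zero hlam hΩm2) hΩm1
    rw [div_mul_div_comm, eq_div_iff (mul_ne_zero (mul_ne_zero hgne hfne) (hden1 m))]
    have hgm2 : g (m + 2) = lam * Ω (m + 3) / Ω (m + 2) := by
      rw [hg (m + 2), show (m : ℤ) + 2 + 1 = m + 3 by ring]
    rw [hgm2, hg m, hf m, ht m]
    field_simp
    linear_combination h
  intro m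
  refine ⟨key m, ?_⟩
  have h1 : f (m + 2) = g (m + 3) := by
    rw [hf (m + 2), hg (m + 3), show (m : ℤ) + 2 + 2 = m + 3 + 1 by ring,
      show (m : ℤ) + 2 + 1 = m + 3 by ring]
  have h2 : g (m + 2) = f (m + 1) := by
    rw [hg (m + 2), hf (m + 1), show (m : ℤ) + 2 + 1 = m + 1 + 2 by ring,
      show (m : ℤ) + 1 + 1 = m + 2 by ring]
  have h3 : f m = g (m + 1) := by
    rw [hf m, hg (m + 1), show (m : ℤ) + 1 + 1 = m + 2 by ring]
  have h4 : a m * t m = t (m + 1) := by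
    have hb1 := hβ m
    have hb2 := hβ (m + 1)
    rw [ha m, ht m, ht (m + 1)]
    field_simp
  have h5 := key (m + 1)
  rw [show (m : ℤ) + 1 + 2 = m + 3 by ring] at h5
  rw [h1, h2, h3, h4, h5]
end

section
/- Let F be a field and let a₀, a₁, a₂, f₀, f₁, f₂ be nonzero elements of F. Define the map S₀ : (a₀,a₁,a₂,f₀,f₁,f₂) ↦ (a₀^{-1}, a₀a₁, a₀a₂, f₀, f₁(a₀+f₀)/(1+a₀f₀), f₂(1+a₀f₀)/(a₀+f₀)). Then, whenever all denominators appearing are nonzero, S₀ ∘ S₀ is the identity, i.e. applying S₀ twice returns the original tuple. (This is the relation s₀² = 1 of the birational representation of the extended affine Weyl group W̃((A₂+A₁)^{(1)}) on the f-variables.) -/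
/-- The birational action of the generator `s₀` of `W̃((A₂+A₁)⁽¹⁾)` on the
tuple `(a₀, a₁, a₂, f₀, f₁, f₂)`. -/
def weylS0 {F : Type*} [Field F] :
    F × F × F × F × F × F → F × F × F × F × F × F
  | (a0, a1, a2, f0, f1, f2) =>
    (a0⁻¹, a0 * a1, a0 * a2, f0,
      f1 * (a0 + f0) / (1 + a0 * f0),
      f2 * (1 + a0 * f0) / (a0 + f0))

/-- the relation `s₀² = 1` of the birational representation of
`W̃((A₂+A₁)⁽¹⁾)` on the `f`-variables. -/
theorem weylS0_involutive
    (F : Type*) [Field F] (a0 a1 a2 f0 f1 f2 : F)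
    (ha0 : a0 ≠ 0) (ha1 : a1 ≠ 0) (ha2 : a2 ≠ 0)
    (hf0 : f0 ≠ 0) (hf1 : f1 ≠ 0) (hf2 : f2 ≠ 0)
    (hd1 : 1 + a0 * f0 ≠ 0) (hd2 : a0 + f0 ≠ 0)
    (hd3 : 1 + a0⁻¹ * f0 ≠ 0) (hd4 : a0⁻¹ + f0 ≠ 0) :
    weylS0 (weylS0 (a0, a1, a2, f0, f1, f2)) = (a0, a1, a2, f0, f1, f2) := by
  simp only [weylS0, Prod.mk.injEq]
  refine ⟨by simp [ha0], by field_simp, by field_simp, trivial, ?_, ?_⟩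
  · rw [div_eq_iff hd3, div_mul_eq_mul_div, div_eq_iff hd1]
    field_simp
  · rw [div_eq_iff hd4, div_mul_eq_mul_div, div_eq_iff hd2]
    field_simp
end

section
/- Let F be a field and let a₀, a₁, a₂, c, f₀, f₁, f₂ be nonzero elements of F. Define the map W₀ fixing a₀,a₁,a₂, sending c ↦ c^{-1}, and sending f_i ↦ a_i a_{i+1}(a_{i-1}a_i + a_{i-1}f_i + f_{i-1}f_i)/(f_{i-1}(a_i a_{i+1} + a_i f_{i+1} + f_i f_{i+1})) for i = 0,1,2 (indices mod 3). Then, whenever all intermediate denominators are nonzero, W₀ ∘ W₀ is the identity map. (This is the relation w₀² = 1 of the birational representation of W̃((A₂+A₁)^{(1)}) on the f-variables.) -/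
/-- The birational action of the generator `w₀` of `W̃((A₂+A₁)⁽¹⁾)` on
`(a₀, a₁, a₂, c, f₀, f₁, f₂)`: it fixes the `aᵢ`, sends `c ↦ c⁻¹` and
`fᵢ ↦ aᵢa_{i+1}(a_{i-1}aᵢ + a_{i-1}fᵢ + f_{i-1}fᵢ) /
       (f_{i-1}(aᵢa_{i+1} + aᵢf_{i+1} + fᵢf_{i+1}))` (indices mod 3). -/
def weylW0 {F : Type*} [Field F] :
    F × F × F × F × F × F × F → F × F × F × F × F × F × F
  | (a0, a1, a2, c, f0, f1, f2) =>
    (a0, a1, a2, c⁻¹,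
      a0 * a1 * (a2 * a0 + a2 * f0 + f2 * f0) / (f2 * (a0 * a1 + a0 * f1 + f0 * f1)),
      a1 * a2 * (a0 * a1 + a0 * f1 + f0 * f1) / (f0 * (a1 * a2 + a1 * f2 + f1 * f2)),
      a2 * a0 * (a1 * a2 + a1 * f2 + f1 * f2) / (f1 * (a2 * a0 + a2 * f0 + f2 * f0)))

/-- Nonvanishing of the denominators appearing in `w₀`. -/
def denW0 {F : Type*} [Field F] (x : F × F × F × F × F × F × F) : Prop :=
  match x with
  | (a0, a1, a2, _, f0, f1, f2) =>
    f2 * (a0 * a1 + a0 * f1 + f0 * f1) ≠ 0 ∧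
    f0 * (a1 * a2 + a1 * f2 + f1 * f2) ≠ 0 ∧
    f1 * (a2 * a0 + a2 * f0 + f2 * f0) ≠ 0

/-- the relation `w₀² = 1` of the birational representation of
`W̃((A₂+A₁)⁽¹⁾)` on the `f`-variables. -/
theorem weylW0_involutive
    (F : Type*) [Field F] (a0 a1 a2 c f0 f1 f2 : F)
    (ha0 : a0 ≠ 0) (ha1 : a1 ≠ 0) (ha2 : a2 ≠ 0) (hc : c ≠ 0)
    (hf0 : f0 ≠ 0) (hf1 : f1 ≠ 0) (hf2 : f2 ≠ 0)
    (h1 : denW0 (a0, a1, a2, c, f0, f1, f2))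
    (h2 : denW0 (weylW0 (a0, a1, a2, c, f0, f1, f2))) :
    weylW0 (weylW0 (a0, a1, a2, c, f0, f1, f2)) = (a0, a1, a2, c, f0, f1, f2) := by
  simp only [weylW0, denW0] at h1 h2 ⊢
  obtain ⟨h1a, h1b, h1c⟩ := h1
  obtain ⟨h2a, h2b, h2c⟩ := h2
  have hN0 : a0 * a1 + a0 * f1 + f0 * f1 ≠ 0 := (mul_ne_zero_iff.mp h1a).2
  have hN1 : a1 * a2 + a1 * f2 + f1 * f2 ≠ 0 := (mul_ne_zero_iff.mp h1b).2
  have hN2 : a2 * a0 + a2 * f0 + f2 * f0 ≠ 0 := (mul_ne_zero_iff.mp h1c).2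
  refine Prod.ext rfl (Prod.ext rfl (Prod.ext rfl (Prod.ext (inv_inv c) (Prod.ext ?_ (Prod.ext ?_ ?_)))))
  · rw [div_eq_iff h2a]
    generalize hn0 : a0 * a1 + a0 * f1 + f0 * f1 = N0 at *
    generalize hn1 : a1 * a2 + a1 * f2 + f1 * f2 = N1 at *
    generalize hn2 : a2 * a0 + a2 * f0 + f2 * f0 = N2 at *
    field_simp
    subst hn0 hn1 hn2
    ring
  · rw [div_eq_iff h2b]
    generalize hn0 : a0 * a1 + a0 * f1 + f0 * f1 = N0 at *
    generalize hn1 : a1 * a2 + a1 * f2 + f1 * f2 = N1 at *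
    generalize hn2 : a2 * a0 + a2 * f0 + f2 * f0 = N2 at *
    field_simp
    subst hn0 hn1 hn2
    ring
  · rw [div_eq_iff h2c]
    generalize hn0 : a0 * a1 + a0 * f1 + f0 * f1 = N0 at *
    generalize hn1 : a1 * a2 + a1 * f2 + f1 * f2 = N1 at *
    generalize hn2 : a2 * a0 + a2 * f0 + f2 * f0 = N2 at *
    field_simp
    subst hn0 hn1 hn2
    ring
end

section
/- Let F be a field and let a₀, a₁, a₂, f₀, f₁, f₂ be nonzero elements of F. For i = 0,1,2 (indices mod 3) let h_i(a; f) = a_i a_{i+1}(a_{i-1}a_i + a_{i-1}f_i + f_{i-1}f_i)/(f_{i-1}(a_i a_{i+1} + a_i f_{i+1} + f_i f_{i+1})) be the w₀-image of f_i. Then, whenever the denominators involved are nonzero: h₀(a₀,a₁,a₂; f₀^{-1},f₁^{-1},f₂^{-1}) = a₀a₁ f₁ (1 + a₂f₂(a₀f₀+1))/(1 + a₀f₀(a₁f₁+1)), h₁(a₀,a₁,a₂; f₀^{-1},f₁^{-1},f₂^{-1}) = a₁a₂ f₂ (1 + a₀f₀(a₁f₁+1))/(1 + a₁f₁(a₂f₂+1)),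 and h₂(a₀,a₁,a₂; f₀^{-1},f₁^{-1},f₂^{-1}) = a₂a₀ f₀ (1 + a₁f₁(a₂f₂+1))/(1 + a₂f₂(a₀f₀+1)). (This gives the closed-form action of the translation T₄ = r w₀, i.e. the q-Painlevé IV evolution, on the f-variables.) -/
/-- closed-form action of the translation `T₄ = r w₀`
(the `q`-Painlevé IV evolution) on the `f`-variables: evaluating the
`w₀`-formulas `hᵢ` at the inverted `f`-variables gives the stated rational
expressions. -/
theorem qPIV_evolution_closed_form
    (F : Type*) [Field F] (a0 a1 a2 f0 f1 f2 : F)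
    (ha0 : a0 ≠ 0) (ha1 : a1 ≠ 0) (ha2 : a2 ≠ 0)
    (hf0 : f0 ≠ 0) (hf1 : f1 ≠ 0) (hf2 : f2 ≠ 0)
    (hd0 : a0 * a1 + a0 * f1⁻¹ + f0⁻¹ * f1⁻¹ ≠ 0)
    (hd1 : a1 * a2 + a1 * f2⁻¹ + f1⁻¹ * f2⁻¹ ≠ 0)
    (hd2 : a2 * a0 + a2 * f0⁻¹ + f2⁻¹ * f0⁻¹ ≠ 0)
    (he0 : 1 + a0 * f0 * (a1 * f1 + 1) ≠ 0)
    (he1 : 1 + a1 * f1 * (a2 * f2 + 1) ≠ 0)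
    (he2 : 1 + a2 * f2 * (a0 * f0 + 1) ≠ 0) :
    a0 * a1 * (a2 * a0 + a2 * f0⁻¹ + f2⁻¹ * f0⁻¹) /
        (f2⁻¹ * (a0 * a1 + a0 * f1⁻¹ + f0⁻¹ * f1⁻¹)) =
      a0 * a1 * f1 * (1 + a2 * f2 * (a0 * f0 + 1)) / (1 + a0 * f0 * (a1 * f1 + 1)) ∧
    a1 * a2 * (a0 * a1 + a0 * f1⁻¹ + f0⁻¹ * f1⁻¹) /
        (f0⁻¹ * (a1 * a2 + a1 * f2⁻¹ + f1⁻¹ * f2⁻¹)) =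
      a1 * a2 * f2 * (1 + a0 * f0 * (a1 * f1 + 1)) / (1 + a1 * f1 * (a2 * f2 + 1)) ∧
    a2 * a0 * (a1 * a2 + a1 * f2⁻¹ + f1⁻¹ * f2⁻¹) /
        (f1⁻¹ * (a2 * a0 + a2 * f0⁻¹ + f2⁻¹ * f0⁻¹)) =
      a2 * a0 * f0 * (1 + a1 * f1 * (a2 * f2 + 1)) / (1 + a2 * f2 * (a0 * f0 + 1)) := by
  have m0 : f2⁻¹ * (a0 * a1 + a0 * f1⁻¹ + f0⁻¹ * f1⁻¹)
      = (1 + a0 * f0 * (a1 * f1 + 1)) * (f0 * f1 * f2)⁻¹ := by field_simp; ring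
  have m1 : f0⁻¹ * (a1 * a2 + a1 * f2⁻¹ + f1⁻¹ * f2⁻¹)
      = (1 + a1 * f1 * (a2 * f2 + 1)) * (f1 * f2 * f0)⁻¹ := by field_simp; ring
  have m2 : f1⁻¹ * (a2 * a0 + a2 * f0⁻¹ + f2⁻¹ * f0⁻¹)
      = (1 + a2 * f2 * (a0 * f0 + 1)) * (f2 * f0 * f1)⁻¹ := by field_simp; ring
  have p0 : a0 * a1 + a0 * f1⁻¹ + f0⁻¹ * f1⁻¹
      = (1 + a0 * f0 * (a1 * f1 + 1)) * (f0 * f1)⁻¹ := by field_simp; ring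
  have p1 : a1 * a2 + a1 * f2⁻¹ + f1⁻¹ * f2⁻¹
      = (1 + a1 * f1 * (a2 * f2 + 1)) * (f1 * f2)⁻¹ := by field_simp; ring
  have p2 : a2 * a0 + a2 * f0⁻¹ + f2⁻¹ * f0⁻¹
      = (1 + a2 * f2 * (a0 * f0 + 1)) * (f2 * f0)⁻¹ := by field_simp; ring
  refine ⟨?_, ?_, ?_⟩
  · rw [m0, p2]; field_simp
  · rw [m1, p0]; field_simp
  · rw [m2, p1]; field_simp
end

section
/- Let F be a field and let q, p, c, a₀, a₂ ∈ F be nonzero with p² = q and a₂ = p. Fix N ∈ ℤ and let g, h : ℤ → F take nonzero values and satisfy, for all n ∈ ℤ (all denominators nonzero): g_{n+1} = (q^{2N+1}c²/(g_n h_n))·(1 + a₀qⁿ h_n)/(a₀qⁿ + h_n) and h_{n+1} = (q^{2N+1}c²/(h_n g_{n+1}))·(1 + a₂a₀qⁿ g_{n+1})/(a₂a₀qⁿ + g_{n+1}). Define f : ℤ → F by f_{2M-1} = g_M and f_{2M} = h_M. Then for all M ∈ ℤ: f_{M+1} = (q^{2N+1}c²/(f_{M-1} f_M))·(1 + a₀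 p^M f_M)/(a₀ p^M + f_M), i.e. f solves the q-Painlevé II equation. -/
/-- the projective reduction (symmetrization) of the
`q`-Painlevé III system to the `q`-Painlevé II equation: interleaving the
two components `g, h` of the `q`-PIII system into `f_{2M-1} = g_M`,
`f_{2M} = h_M`, with `a₂ = p` and `p² = q`, the sequence `f` solves
`f_{M+1} = (q^{2N+1}c²/(f_{M-1}f_M))·(1 + a₀p^M f_M)/(a₀p^M + f_M)`. -/
theorem qPIII_projective_reduction_to_qPII
    (F : Type*) [Field F] (q p c a0 a2 : F)
    (hq : q ≠ 0) (hp : p ≠ 0) (hc : c ≠ 0) (ha0 : a0 ≠ 0) (ha2 : a2 ≠ 0)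
    (hp2 : p ^ 2 = q) (ha2p : a2 = p) (N : ℤ)
    (g h : ℤ → F) (hg : ∀ n, g n ≠ 0) (hh : ∀ n, h n ≠ 0)
    (hden1 : ∀ n : ℤ, a0 * q ^ n + h n ≠ 0)
    (hden2 : ∀ n : ℤ, a2 * a0 * q ^ n + g (n + 1) ≠ 0)
    (heq1 : ∀ n : ℤ, g (n + 1) =
      q ^ (2 * N + 1) * c ^ 2 / (g n * h n) *
        ((1 + a0 * q ^ n * h n) / (a0 * q ^ n + h n)))
    (heq2 : ∀ n : ℤ, h (n + 1) =
      q ^ (2 * N + 1) * c ^ 2 / (h n * g (n + 1)) *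
        ((1 + a2 * a0 * q ^ n * g (n + 1)) / (a2 * a0 * q ^ n + g (n + 1))))
    (f : ℤ → F)
    (hf1 : ∀ M : ℤ, f (2 * M - 1) = g M)
    (hf2 : ∀ M : ℤ, f (2 * M) = h M) :
    ∀ M : ℤ, f (M + 1) =
      q ^ (2 * N + 1) * c ^ 2 / (f (M - 1) * f M) *
        ((1 + a0 * p ^ M * f M) / (a0 * p ^ M + f M)) := by
  intro M
  obtain ⟨k, hk | hk⟩ := Int.even_or_odd' M
  · -- M = 2k
    have hpM : p ^ M = q ^ k := by
      rw [hk, zpow_mul, show p ^ (2:ℤ) = q by rw [zpow_two, ← hp2, sq]]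
    have e1 : f (M + 1) = g (k + 1) := by
      rw [show M + 1 = 2 * (k + 1) - 1 by omega, hf1]
    have e2 : f (M - 1) = g k := by
      rw [show M - 1 = 2 * k - 1 by omega, hf1]
    have e3 : f M = h k := by rw [hk, hf2]
    rw [e1, e2, e3, hpM]
    exact heq1 k
  · -- M = 2k + 1
    have hpM : p ^ M = a2 * q ^ k := by
      rw [hk, zpow_add₀ hp, zpow_mul, show p ^ (2:ℤ) = q by rw [zpow_two, ← hp2, sq],
        zpow_one, ha2p, mul_comm]
    have e1 : f (M + 1) = h (k + 1) := by
      rw [show M + 1 = 2 * (k + 1) by omega, hf2]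
    have e2 : f (M - 1) = h k := by
      rw [show M - 1 = 2 * k by omega, hf2]
    have e3 : f M = g (k + 1) := by
      rw [show M = 2 * (k + 1) - 1 by omega, hf1]
    rw [e1, e2, e3, hpM]
    have := heq2 k
    rw [this]
    ring_nf
end

section
/- Let F be a field and let a₀, κ₀, κ₁, κ₂, λ, ω₀, ω₁, ω₂ be nonzero elements of F with κ₀κ₁κ₂ = λ. Define W = ω₀(a₀λω₁ + κ₀ω₂)/(κ₀κ₂(λω₁ + a₀κ₀ω₂)); this is the image T₁(ω₂) of ω₂ under the translation T₁ = π s₂ s₁ in the ω-representation of W̃((A₂+A₁)^{(1)}). Then, whenever the denominators involved are nonzero: ω₁/ω₂ = (a₀κ₂κ₀ W − ω₀)/(a₀κ₂κ₁ ω₀ − λκ₂ W). (This is the quad-equation of ABS type H3_{(δ,ε)=(0,0)} underlying the T₁-direction of the ω-lattice.) -/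
/-- the quad-equation of ABS type `H3_{(0,0)}` underlying the
`T₁`-direction of the `ω`-lattice of the `A₅⁽¹⁾`-surface `q`-Painlevé system:
with `W = T₁(ω₂) = ω₀(a₀λω₁ + κ₀ω₂)/(κ₀κ₂(λω₁ + a₀κ₀ω₂))`, one has
`ω₁/ω₂ = (a₀κ₂κ₀W − ω₀)/(a₀κ₂κ₁ω₀ − λκ₂W)`. -/
theorem omega_lattice_H3_T1
    (F : Type*) [Field F] (a0 k0 k1 k2 lam w0 w1 w2 W : F)
    (ha0 : a0 ≠ 0) (hk0 : k0 ≠ 0) (hk1 : k1 ≠ 0) (hk2 : k2 ≠ 0)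
    (hlam : lam ≠ 0) (hw0 : w0 ≠ 0) (hw1 : w1 ≠ 0) (hw2 : w2 ≠ 0)
    (hkappa : k0 * k1 * k2 = lam)
    (hden1 : lam * w1 + a0 * k0 * w2 ≠ 0)
    (hW : W = w0 * (a0 * lam * w1 + k0 * w2) / (k0 * k2 * (lam * w1 + a0 * k0 * w2)))
    (hden2 : a0 * k2 * k1 * w0 - lam * k2 * W ≠ 0) :
    w1 / w2 = (a0 * k2 * k0 * W - w0) / (a0 * k2 * k1 * w0 - lam * k2 * W) := by
  subst hW hkappa
  rw [div_eq_div_iff hw2 hden2]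
  have h3 : w1 * k2 * k1 + a0 * w2 ≠ 0 := by
    intro h; apply hden1; linear_combination k0 * h
  field_simp
  ring
end

section
/- Let F be a field and let a₀, a₁, a₂, κ₀, κ₁, κ₂, λ, ω₀, ω₁, ω₂ be nonzero elements of F with κ₀κ₁κ₂ = λ, and set q = a₀a₁a₂. For i = 0,1,2 (indices mod 3) define V_i = κ_{i+2}ω_{i+1}ω_{i+2}/(κ_{i+1}ω_i) + a_{i+2}κ_iκ_{i+2}ω_{i+2} + κ_{i+2}ω_{i+1}/(a_{i+1}λ); this is the image T₄(ω_i) of ω_i under the translation T₄ = r w₀, obtained by substituting ω_j ↦ ω_j^{-1}, κ_j ↦ κ_j^{-1}, λ ↦ λ^{-1} into w₀(ω_i) = (a_{i+1}κ_iκ_{i+1}ω_i + a_{i+1}a_{i+2}ω_{i+1} + κ_iλω_{i+2})/(a_{i+1}κ_iκ_{i+2}ω_{i+1}ω_{i+2}). Then, whenever the denominators involved are nonzero: a₂κ₂ V₁/ω₀ − κ₂^{-1} V₀/ω₁ = (qλ² − 1)/(λa₁), and κ₁ V₀/ω₂ − (a₁κ₁)^{-1} V₂/ω₀ = a₂(qλ²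 − 1)/(qλ). (These are quad-equations of ABS type D4_{(1,0,0)} underlying the T₄-direction of the ω-lattice.) -/
/-- the quad-equations of ABS type `D4_{(1,0,0)}` underlying the
`T₄`-direction of the `ω`-lattice of the `A₅⁽¹⁾`-surface `q`-Painlevé system.
Here `Vᵢ = T₄(ωᵢ) = κ_{i+2}ω_{i+1}ω_{i+2}/(κ_{i+1}ωᵢ) + a_{i+2}κᵢκ_{i+2}ω_{i+2}
+ κ_{i+2}ω_{i+1}/(a_{i+1}λ)` (indices mod 3), and
`a₂κ₂V₁/ω₀ − κ₂⁻¹V₀/ω₁ = (qλ² − 1)/(λa₁)`,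
`κ₁V₀/ω₂ − (a₁κ₁)⁻¹V₂/ω₀ = a₂(qλ² − 1)/(qλ)`. -/
theorem omega_lattice_D4_T4
    (F : Type*) [Field F] (a0 a1 a2 k0 k1 k2 lam w0 w1 w2 q V0 V1 V2 : F)
    (ha0 : a0 ≠ 0) (ha1 : a1 ≠ 0) (ha2 : a2 ≠ 0)
    (hk0 : k0 ≠ 0) (hk1 : k1 ≠ 0) (hk2 : k2 ≠ 0) (hlam : lam ≠ 0)
    (hw0 : w0 ≠ 0) (hw1 : w1 ≠ 0) (hw2 : w2 ≠ 0)
    (hkappa : k0 * k1 * k2 = lam) (hq : q = a0 * a1 * a2)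
    (hV0 : V0 = k2 * w1 * w2 / (k1 * w0) + a2 * k0 * k2 * w2 + k2 * w1 / (a1 * lam))
    (hV1 : V1 = k0 * w2 * w0 / (k2 * w1) + a0 * k1 * k0 * w0 + k0 * w2 / (a2 * lam))
    (hV2 : V2 = k1 * w0 * w1 / (k0 * w2) + a1 * k2 * k1 * w1 + k1 * w0 / (a0 * lam)) :
    a2 * k2 * V1 / w0 - k2⁻¹ * V0 / w1 = (q * lam ^ 2 - 1) / (lam * a1) ∧
    k1 * V0 / w2 - (a1 * k1)⁻¹ * V2 / w0 = a2 * (q * lam ^ 2 - 1) / (q * lam) := by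
  have hq0 : q ≠ 0 := by rw [hq]; exact mul_ne_zero (mul_ne_zero ha0 ha1) ha2
  have e0 : V0 = (a1 * lam * k2 * w1 * w2 + a1 * lam * a2 * k0 * k2 * w2 * (k1 * w0)
      + k2 * w1 * (k1 * w0)) / (k1 * w0 * (a1 * lam)) := by
    rw [hV0]; field_simp
  have e1 : V1 = (a2 * lam * k0 * w2 * w0 + a2 * lam * a0 * k1 * k0 * w0 * (k2 * w1)
      + k0 * w2 * (k2 * w1)) / (k2 * w1 * (a2 * lam)) := by
    rw [hV1]; field_simp
  have e2 : V2 = (a0 * lam * k1 * w0 * w1 + a0 * lam * a1 * k2 * k1 * w1 * (k0 * w2)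
      + k1 * w0 * (k0 * w2)) / (k0 * w2 * (a0 * lam)) := by
    rw [hV2]; field_simp
  constructor
  · rw [e0, e1, ← mul_div_assoc, ← mul_div_assoc, div_div, div_div,
      div_sub_div _ _
        (mul_ne_zero (mul_ne_zero (mul_ne_zero hk2 hw1) (mul_ne_zero ha2 hlam)) hw0)
        (mul_ne_zero (mul_ne_zero (mul_ne_zero hk1 hw0) (mul_ne_zero ha1 hlam)) hw1),
      div_eq_div_iff
        (mul_ne_zero (mul_ne_zero (mul_ne_zero (mul_ne_zero hk2 hw1) (mul_ne_zero ha2 hlam)) hw0)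
          (mul_ne_zero (mul_ne_zero (mul_ne_zero hk1 hw0) (mul_ne_zero ha1 hlam)) hw1))
        (mul_ne_zero hlam ha1),
      inv_eq_one_div, hq, ← hkappa]
    field_simp
    ring
  · rw [e0, e2, ← mul_div_assoc, ← mul_div_assoc, div_div, div_div,
      div_sub_div _ _
        (mul_ne_zero (mul_ne_zero (mul_ne_zero hk1 hw0) (mul_ne_zero ha1 hlam)) hw2)
        (mul_ne_zero (mul_ne_zero (mul_ne_zero hk0 hw2) (mul_ne_zero ha0 hlam)) hw0),
      div_eq_div_iff
        (mul_ne_zero (mul_ne_zero (mul_ne_zero (mul_ne_zero hk1 hw0) (mul_ne_zero ha1 hlam)) hw2)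
          (mul_ne_zero (mul_ne_zero (mul_ne_zero hk0 hw2) (mul_ne_zero ha0 hlam)) hw0))
        (mul_ne_zero hq0 hlam),
      inv_eq_one_div, hq, ← hkappa]
    field_simp
    ring
end

section
/- Let F be a field and let a₁, a₂, κ₀, κ₁, κ₂, λ, ω₀, ω₁, ω₂, V, W be nonzero elements of F with κ₀κ₁κ₂ = λ. Assume: (i) ω₂/ω₀ = (a₁κ₀κ₁ V − ω₁)/(a₁κ₀κ₂ ω₁ − λκ₀ V), and (ii) W = (ω₀ω₁ + a₁κ₀(λa₂ω₀ + κ₂ω₁)ω₂)/(a₁κ₀κ₁ω₀), with all denominators nonzero. Then W = ((a₁² − 1) ω₁ V + a₁a₂(a₁κ₀κ₁ V − ω₁) ω₀) / (a₁(a₁ω₁ − κ₀κ₁ V)). (Here V plays the role of T₂(ω₀) and W that of T₄(ω₀) on the ω-lattice; the conclusion is the quad-equation of ABS type H3_{(δ,ε)=(0,1)} relating the T₂- and T₄-directions, obtained by eliminating ω₂.) -/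
/-- the quad-equation of ABS type `H3_{(0,1)}` relating the
`T₂`- and `T₄`-directions of the `ω`-lattice, obtained by eliminating `ω₂`.
Here `V` plays the role of `T₂(ω₀)` and `W` that of `T₄(ω₀)`. -/
theorem omega_lattice_H3_T2T4
    (F : Type*) [Field F] (a1 a2 k0 k1 k2 lam w0 w1 w2 V W : F)
    (ha1 : a1 ≠ 0) (ha2 : a2 ≠ 0)
    (hk0 : k0 ≠ 0) (hk1 : k1 ≠ 0) (hk2 : k2 ≠ 0) (hlam : lam ≠ 0)
    (hw0 : w0 ≠ 0) (hw1 : w1 ≠ 0) (hw2 : w2 ≠ 0) (hV : V ≠ 0) (hW : W ≠ 0)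
    (hkappa : k0 * k1 * k2 = lam)
    (hden1 : a1 * k0 * k2 * w1 - lam * k0 * V ≠ 0)
    (h1 : w2 / w0 = (a1 * k0 * k1 * V - w1) / (a1 * k0 * k2 * w1 - lam * k0 * V))
    (h2 : W = (w0 * w1 + a1 * k0 * (lam * a2 * w0 + k2 * w1) * w2) / (a1 * k0 * k1 * w0))
    (hden2 : a1 * w1 - k0 * k1 * V ≠ 0) :
    W = ((a1 ^ 2 - 1) * w1 * V + a1 * a2 * (a1 * k0 * k1 * V - w1) * w0) /
      (a1 * (a1 * w1 - k0 * k1 * V)) := by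
  subst hkappa
  field_simp at h1 h2
  rw [eq_div_iff (mul_ne_zero ha1 hden2)]
  have key : (W * (a1 * (a1 * w1 - k0 * k1 * V)) -
      ((a1 ^ 2 - 1) * w1 * V + a1 * a2 * (a1 * k0 * k1 * V - w1) * w0)) * (k0 * k1 * w0) = 0 := by
    linear_combination (a1 * w1 - k0 * k1 * V) * h2 + a1 * (k0 * k1 * a2 * w0 + w1) * h1
  have h0 : k0 * k1 * w0 ≠ 0 := mul_ne_zero (mul_ne_zero hk0 hk1) hw0
  have := (mul_eq_zero.mp key).resolve_right h0
  linear_combination this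
end

section
/- Let F be a field, let p, q, λ ∈ F be nonzero with p² = q, let α : ℤ → F and β : ℤ → F be sequences of nonzero elements with α_{l+1} = q²α_l and β_{m+2} = q^{-2}β_m for all l,m, and let ζ : ℤ × ℤ → F take nonzero values with the (1,−2)-periodicity ζ_{l+1,m−2} = ζ_{l,m}. Define U_{l,m} = p^{-m}λ^{-m}ζ_{l,m}, and assume U satisfies the discrete Schwarzian KdV equation (U_{l,m} − U_{l+1,m})(U_{l,m+1} − U_{l+1,m+1}) / ((U_{l,m} − U_{l,m+1})(U_{l+1,m} − U_{l+1,m+1})) = α_l/β_m for all l,m (denominators nonzero). Then for all l,m: (ζ_{l,m} − ζ_{l,m+2})(ζ_{l,m+1} − ζ_{l,m+3}) / ((pλ ζ_{l,m} − ζ_{l,m+1})(pλ ζ_{l,m+2} − ζ_{l,m+3})) = α_l/(pλ β_m). -/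
/-- the `(1,−2)`-periodic reduction of the discrete Schwarzian
KdV equation (ABS type `Q1_{ε=0}`, the cross-ratio equation), with
`U_{l,m} = p^{-m}λ^{-m}ζ_{l,m}` (`p² = q`), parameter conditions
`α_{l+1} = q²α_l`, `β_{m+2} = q^{-2}β_m`, and periodicity
`ζ_{l+1,m−2} = ζ_{l,m}`, yields
`(ζ_{l,m} − ζ_{l,m+2})(ζ_{l,m+1} − ζ_{l,m+3}) /
 ((pλζ_{l,m} − ζ_{l,m+1})(pλζ_{l,m+2} − ζ_{l,m+3})) = α_l/(pλβ_m)`. -/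
theorem reduced_discrete_schwarzian_kdv
    (F : Type*) [Field F] (p q lam : F)
    (hp : p ≠ 0) (hq : q ≠ 0) (hlam : lam ≠ 0) (hpq : p ^ 2 = q)
    (α β : ℤ → F) (hα : ∀ l, α l ≠ 0) (hβ : ∀ m, β m ≠ 0)
    (hαper : ∀ l : ℤ, α (l + 1) = q ^ 2 * α l)
    (hβper : ∀ m : ℤ, β (m + 2) = q ^ (-2 : ℤ) * β m)
    (ζ : ℤ → ℤ → F) (hζ : ∀ l m, ζ l m ≠ 0)
    (hper : ∀ l m, ζ (l + 1) (m - 2) = ζ l m)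
    (U : ℤ → ℤ → F)
    (hU : ∀ l m : ℤ, U l m = p ^ (-m) * lam ^ (-m) * ζ l m)
    (hden : ∀ l m, (U l m - U l (m + 1)) * (U (l + 1) m - U (l + 1) (m + 1)) ≠ 0)
    (hdskdv : ∀ l m,
      (U l m - U (l + 1) m) * (U l (m + 1) - U (l + 1) (m + 1)) /
        ((U l m - U l (m + 1)) * (U (l + 1) m - U (l + 1) (m + 1))) = α l / β m) :
    ∀ l m,
      (ζ l m - ζ l (m + 2)) * (ζ l (m + 1) - ζ l (m + 3)) /
        ((p * lam * ζ l m - ζ l (m + 1)) * (p * lam * ζ l (m + 2) - ζ l (m + 3))) =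
      α l / (p * lam * β m) := by
  intro l m
  have hpl : p * lam ≠ 0 := mul_ne_zero hp hlam
  have h2 : ζ (l + 1) m = ζ l (m + 2) := by
    have h := hper l (m + 2)
    rwa [show m + 2 - 2 = m by ring] at h
  have h3 : ζ (l + 1) (m + 1) = ζ l (m + 3) := by
    have h := hper l (m + 3)
    rwa [show m + 3 - 2 = m + 1 by ring] at h
  have hde := hden l m
  have heq := hdskdv l m
  rw [hU l m, hU l (m + 1), hU (l + 1) m, hU (l + 1) (m + 1), h2, h3] at hde heq
  set a : F := p ^ (-m) * lam ^ (-m) with ha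
  have haz : a ≠ 0 := mul_ne_zero (zpow_ne_zero _ hp) (zpow_ne_zero _ hlam)
  have e1 : p ^ (-(m + 1)) * lam ^ (-(m + 1)) = a / (p * lam) := by
    rw [ha, neg_add, zpow_add₀ hp, zpow_add₀ hlam, zpow_neg_one, zpow_neg_one]
    field_simp
  rw [e1] at hde heq
  clear_value a
  have efac : (a * ζ l m - a / (p * lam) * ζ l (m + 1)) *
      (a * ζ l (m + 2) - a / (p * lam) * ζ l (m + 3)) =
      (a / (p * lam)) ^ 2 * ((p * lam * ζ l m - ζ l (m + 1)) *
        (p * lam * ζ l (m + 2) - ζ l (m + 3))) := by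
    field_simp
  rw [efac] at hde heq
  have hD : (p * lam * ζ l m - ζ l (m + 1)) * (p * lam * ζ l (m + 2) - ζ l (m + 3)) ≠ 0 := by
    intro h
    rw [h, mul_zero] at hde
    exact hde rfl
  rw [div_eq_div_iff hde (hβ m)] at heq
  field_simp at heq
  have key : (ζ l m - ζ l (m + 2)) * (ζ l (m + 1) - ζ l (m + 3)) * β m * (p * lam) =
      α l * ((p * lam * ζ l m - ζ l (m + 1)) * (p * lam * ζ l (m + 2) - ζ l (m + 3))) := by
    apply mul_left_cancel₀ (pow_ne_zero 2 haz)
    apply mul_left_cancel₀ hpl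
    linear_combination (a ^ 2 * (p * lam)) * heq
  rw [div_eq_div_iff hD (mul_ne_zero hpl (hβ m))]
  linear_combination key
end

section
/- Let F be a field, let a₀, a₁, b ∈ F be nonzero with q = a₀a₁, and let g, h : ℤ → F take nonzero values and satisfy, for all l ∈ ℤ (all denominators nonzero, and 1 + g_l ≠ 0): h_{l+1} = a₀(g_l + 1)/(q^l b g_l h_l) and g_{l+1} = (h_{l+1} + 1)/(q^l b h_{l+1} g_l). Then for all l ∈ ℤ: (g_{l+1} g_l − 1/(q^l b))·(g_{l-1} g_l − 1/(q^{l-1} b)) = (q^{-l} a₁ / b)·g_l/(1 + g_l). (That is, the coupled first-order q-Painlevé II system on the A₆^{(1)}-surface f-lattice is equivalent to the single second-order q-Painlevé II equation.) -/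
/-- the coupled first-order `q`-Painlevé II system on the
`A₆⁽¹⁾`-surface `f`-lattice is equivalent to the single second-order
`q`-Painlevé II equation. -/
theorem A6_coupled_system_to_qPII
    (F : Type*) [Field F] (a0 a1 b q : F)
    (ha0 : a0 ≠ 0) (ha1 : a1 ≠ 0) (hb : b ≠ 0) (hq : q = a0 * a1)
    (g h : ℤ → F) (hg : ∀ l, g l ≠ 0) (hh : ∀ l, h l ≠ 0)
    (hg1 : ∀ l : ℤ, 1 + g l ≠ 0)
    (heq1 : ∀ l : ℤ, h (l + 1) = a0 * (g l + 1) / (q ^ l * b * g l * h l))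
    (heq2 : ∀ l : ℤ, g (l + 1) = (h (l + 1) + 1) / (q ^ l * b * h (l + 1) * g l)) :
    ∀ l : ℤ,
      (g (l + 1) * g l - 1 / (q ^ l * b)) * (g (l - 1) * g l - 1 / (q ^ (l - 1) * b)) =
        q ^ (-l) * a1 / b * (g l / (1 + g l)) := by
  have hq0 : q ≠ 0 := hq ▸ mul_ne_zero ha0 ha1
  have key : ∀ m : ℤ, g (m + 1) * g m - 1 / (q ^ m * b) = 1 / (q ^ m * b * h (m + 1)) := by
    intro m
    have hQ : q ^ m ≠ 0 := zpow_ne_zero _ hq0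
    have hH : h (m + 1) ≠ 0 := hh _
    have hG : g m ≠ 0 := hg _
    have hH1 : h (1 + m) ≠ 0 := by rwa [add_comm]
    rw [heq2 m]
    field_simp
    ring
  intro l
  have k1 := key l
  have k2 := key (l - 1)
  rw [sub_add_cancel] at k2
  have hcomm : g (l - 1) * g l = g l * g (l - 1) := mul_comm _ _
  rw [k1, hcomm, k2, heq1 l]
  have h1 : q ^ (l - 1) = q ^ l / q := by rw [zpow_sub₀ hq0, zpow_one]
  have h2 : (q : F) ^ (-l) = 1 / q ^ l := by rw [zpow_neg, one_div]
  have hQ : q ^ l ≠ 0 := zpow_ne_zero _ hq0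
  have hG : g l ≠ 0 := hg l
  have hH : h l ≠ 0 := hh l
  have hGl : 1 + g l ≠ 0 := hg1 l
  have hgl1 : g l + 1 ≠ 0 := by rwa [add_comm] at hGl
  rw [h1, h2, hq] at *
  field_simp
  ring
end

section
/- Let F be a field, let p, q, b ∈ F be nonzero with p² = q, and set a₀ = p. Let g, h : ℤ → F take nonzero values and satisfy, for all m ∈ ℤ (all denominators nonzero): h_{m+1} = a₀(g_m + 1)/(q^m b g_m h_m) and g_{m+1} = (h_{m+1} + 1)/(q^m b h_{m+1} g_m). Define f : ℤ → F by f_{2m} = g_m and f_{2m+1} = h_{m+1}. Then for all l ∈ ℤ: f_{l+1} f_{l-1} = (f_l + 1)/(p^{l-1} b f_l), i.e. f solves the q-discrete Painlevé I equation. -/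
/-- the projective reduction of the coupled `q`-Painlevé II
system on the `A₆⁽¹⁾`-surface `f`-lattice to the `q`-discrete Painlevé I
equation: with `a₀ = p`, `p² = q`, and the interleaved sequence
`f_{2m} = g_m`, `f_{2m+1} = h_{m+1}`, one has
`f_{l+1}f_{l-1} = (f_l + 1)/(p^{l-1} b f_l)`. -/
theorem A6_projective_reduction_to_qPI
    (F : Type*) [Field F] (p q b : F)
    (hp : p ≠ 0) (hq : q ≠ 0) (hb : b ≠ 0) (hpq : p ^ 2 = q)
    (g h : ℤ → F) (hg : ∀ m, g m ≠ 0) (hh : ∀ m, h m ≠ 0)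
    (heq1 : ∀ m : ℤ, h (m + 1) = p * (g m + 1) / (q ^ m * b * g m * h m))
    (heq2 : ∀ m : ℤ, g (m + 1) = (h (m + 1) + 1) / (q ^ m * b * h (m + 1) * g m))
    (f : ℤ → F)
    (hf1 : ∀ m : ℤ, f (2 * m) = g m)
    (hf2 : ∀ m : ℤ, f (2 * m + 1) = h (m + 1)) :
    ∀ l : ℤ, f (l + 1) * f (l - 1) = (f l + 1) / (p ^ (l - 1) * b * f l) := by
  have hqp : ∀ m : ℤ, q ^ m = p ^ (2 * m) := by
    intro m
    rw [← hpq, ← zpow_natCast p 2, ← zpow_mul]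
    norm_num
  intro l
  obtain ⟨m, rfl | rfl⟩ := l.even_or_odd'
  · -- l = 2m
    have e1 : f (2 * m + 1) = h (m + 1) := hf2 m
    have e2 : f (2 * m - 1) = h m := by
      have := hf2 (m - 1)
      rw [show 2 * (m - 1) + 1 = 2 * m - 1 by ring, show m - 1 + 1 = m by ring] at this
      exact this
    have key := heq1 m
    rw [hqp] at key
    have hpe : (p : F) ^ (2 * m - 1) ≠ 0 := zpow_ne_zero _ hp
    have hpe2 : (p : F) ^ (2 * m) ≠ 0 := zpow_ne_zero _ hp
    have hps : p ^ (2 * m) = p ^ (2 * m - 1) * p := by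
      rw [← zpow_add_one₀ hp]; ring_nf
    have h1 : p ^ (2 * m) * b * g m * h m ≠ 0 := by
      exact mul_ne_zero (mul_ne_zero (mul_ne_zero hpe2 hb) (hg m)) (hh m)
    have h2 : p ^ (2 * m - 1) * b * g m ≠ 0 :=
      mul_ne_zero (mul_ne_zero hpe hb) (hg m)
    rw [e1, e2, hf1 m, key, div_mul_eq_mul_div, div_eq_div_iff h1 h2, hps]
    ring
  · -- l = 2m+1
    have e1 : f (2 * m + 1 + 1) = g (m + 1) := by
      have := hf1 (m + 1)
      rw [show 2 * (m + 1) = 2 * m + 1 + 1 by ring] at this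
      exact this
    have e2 : f (2 * m + 1 - 1) = g m := by
      have := hf1 m
      rw [show 2 * m = 2 * m + 1 - 1 by ring] at this
      exact this
    have key := heq2 m
    rw [hqp] at key
    have hpe2 : (p : F) ^ (2 * m) ≠ 0 := zpow_ne_zero _ hp
    have h1 : p ^ (2 * m) * b * h (m + 1) * g m ≠ 0 :=
      mul_ne_zero (mul_ne_zero (mul_ne_zero hpe2 hb) (hh (m + 1))) (hg m)
    have h2 : p ^ (2 * m) * b * h (m + 1) ≠ 0 :=
      mul_ne_zero (mul_ne_zero hpe2 hb) (hh (m + 1))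
    rw [e1, e2, hf2 m, key, show 2 * m + 1 - 1 = 2 * m by ring,
      div_mul_eq_mul_div, div_eq_div_iff h1 h2]
    ring
end

section
/- Let F be a field, let q ∈ F be nonzero, let α : ℤ → F and β : ℤ → F be sequences of nonzero elements with α_{l+1} = qα_l for all l, and let U : ℤ × ℤ → F take nonzero values with the (1,−2)-periodicity U_{l+1,m−2} = U_{l,m}. Assume U satisfies, for all l,m, the H1_{ε=0}-type quad-equation (U_{l,m} − α_lβ_m U_{l,m+1})(U_{l+1,m} − α_{l+1}β_m U_{l+1,m+1}) = U_{l,m} U_{l,m+1}. Then for all l,m: (U_{l,m} − α_lβ_m U_{l,m+1})(U_{l,m+2} − qα_lβ_m U_{l,m+3}) = U_{l,m} U_{l,m+1}. (That is, the restricted H1-type equation on the projectively reduced ω-lattice of the A₆^{(1)}-surface system is the (1,−2)-periodic reduction of an H1_{ε=0}-type quad-equation.) -/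
/-- the restricted `H1`-type equation on the projectively
reduced `ω`-lattice of the `A₆⁽¹⁾`-surface system is the `(1,−2)`-periodic
reduction of the `H1_{ε=0}`-type quad-equation
`(U_{l,m} − α_lβ_mU_{l,m+1})(U_{l+1,m} − α_{l+1}β_mU_{l+1,m+1}) = U_{l,m}U_{l,m+1}`. -/
theorem reduced_H1_equation
    (F : Type*) [Field F] (q : F) (hq : q ≠ 0)
    (α β : ℤ → F) (hα : ∀ l, α l ≠ 0) (hβ : ∀ m, β m ≠ 0)
    (hαper : ∀ l : ℤ, α (l + 1) = q * α l)
    (U : ℤ → ℤ → F) (hU : ∀ l m, U l m ≠ 0)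
    (hper : ∀ l m, U (l + 1) (m - 2) = U l m)
    (heq : ∀ l m, (U l m - α l * β m * U l (m + 1)) *
      (U (l + 1) m - α (l + 1) * β m * U (l + 1) (m + 1)) = U l m * U l (m + 1)) :
    ∀ l m, (U l m - α l * β m * U l (m + 1)) *
      (U l (m + 2) - q * α l * β m * U l (m + 3)) = U l m * U l (m + 1) := by
  intro l m
  have h1 : U (l + 1) m = U l (m + 2) := by
    have := hper l (m + 2); simpa using this
  have h2 : U (l + 1) (m + 1) = U l (m + 3) := by
    have := hper l (m + 3); rw [show m + 3 - 2 = m + 1 by ring] at this; exact this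
  have := heq l m
  rw [h1, h2, hαper] at this
  exact this
end
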